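/- Every biderivation f of gl_n(ℂ) (n ≥ 2) has the form f(x,y) = μ·tr(x)·tr(y)·I_n + λ·[x,y] for some complex numbers λ, μ. -/

import Mathlib

open Matrix

namespace StmtAux

variable {n : ℕ}

abbrev E (i j : Fin n) : Matrix (Fin n) (Fin n) ℂ := single i j 1

lemma entry_eq {A B : Matrix (Fin n) (Fin n) ℂ} (h : A = B) (s t : Fin n) : A s t = B s t := by
  rw [h]

lemma E_mul_apply (p q s t : Fin n) (X : Matrix (Fin n) (Fin n) ℂ) :
    (E p q * X) s t = if s = p then X q t else 0 := by
  by_cases h : s = p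
  · subst h; simp [E]
  · simp [E, h, Matrix.single_mul_apply_of_ne (h := h)]

lemma mul_E_apply (p q s t : Fin n) (X : Matrix (Fin n) (Fin n) ℂ) :
    (X * E p q) s t = if t = q then X s p else 0 := by
  by_cases h : t = q
  · subst h; simp [E]
  · simp [E, h, Matrix.mul_single_apply_of_ne (hbj := h)]

lemma E_apply (p q s t : Fin n) : E p q s t = if s = p ∧ t = q then 1 else 0 := by
  simp only [E, single, Matrix.of_apply]
  congr 1
  simp only [eq_iff_iff]; constructor <;> rintro ⟨h1,h2⟩ <;> exact ⟨h1.symm,h2.symm⟩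

lemma E_mul_E_same (p q r : Fin n) : E p q * E q r = E p r := by
  simp [E]

lemma E_mul_E_ne (p q r s : Fin n) (h : q ≠ r) : E p q * E r s = 0 := by
  simp [E, Matrix.single_mul_single_of_ne _ _ _ _ h]

lemma smul_one_apply (c : ℂ) (s t : Fin n) : (c • (1 : Matrix (Fin n) (Fin n) ℂ)) s t
    = if s = t then c else 0 := by
  rw [Matrix.smul_apply, Matrix.one_apply]
  split <;> simp

lemma trace_E (p q : Fin n) : (E p q).trace = if p = q then 1 else 0 := by
  by_cases h : p = q
  · subst h; simp [E]
  · simp [E, h, Matrix.trace_single_eq_of_ne _ _ _ h]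

theorem der (hn : 2 ≤ n) (D : Matrix (Fin n) (Fin n) ℂ →ₗ[ℂ] Matrix (Fin n) (Fin n) ℂ)
    (hD : ∀ x y, D (x * y - y * x) = (x * D y - D y * x) + (D x * y - y * D x)) :
    ∃ (a : Matrix (Fin n) (Fin n) ℂ) (β : ℂ), ∀ x,
      D x = a * x - x * a + (β * x.trace) • 1 := by
  have hn0 : (n : ℂ) ≠ 0 := by
    simp only [ne_eq, Nat.cast_eq_zero]; omega
  set i0 : Fin n := ⟨0, by omega⟩ with hi0
  -- traces of commutator images vanish
  have htr0 : ∀ x y : Matrix (Fin n) (Fin n) ℂ, (D (x * y - y * x)).trace = 0 := by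
    intro x y
    rw [hD, trace_add, trace_sub, trace_sub, trace_mul_comm]
    rw [trace_mul_comm (D x) y]
    ring
  set βt : ℂ := (D (E i0 i0)).trace with hβt
  have htrE : ∀ p q : Fin n, (D (E p q)).trace = if p = q then βt else 0 := by
    intro p q
    by_cases h : p = q
    · subst h
      simp only [if_pos rfl]
      by_cases h0 : p = i0
      · subst h0; rfl
      · have key : E p p - E i0 i0 = E p i0 * E i0 p - E i0 p * E p i0 := by
          rw [E_mul_E_same, E_mul_E_same]
        have := htr0 (E p i0) (E i0 p)
        rw [← key, map_sub, trace_sub, sub_eq_zero] at this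
        exact this
    · simp only [if_neg h]
      have key : E p q = E p q * E q q - E q q * E p q := by
        rw [E_mul_E_same, E_mul_E_ne _ _ _ _ (Ne.symm h), sub_zero]
      rw [key]
      exact htr0 _ _
  have htrX : ∀ x : Matrix (Fin n) (Fin n) ℂ, (D x).trace = βt * x.trace := by
    intro x
    conv_lhs => rw [matrix_eq_sum_single x]
    simp_rw [map_sum, trace_sum]
    have : ∀ i j : Fin n, (D (single i j (x i j))).trace
        = x i j * (if i = j then βt else 0) := by
      intro i j
      have : single i j (x i j) = (x i j) • E i j := by
        simp [E]
      rw [this, _root_.map_smul, trace_smul, htrE, smul_eq_mul]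
    simp_rw [this]
    rw [Matrix.trace, Finset.mul_sum, Finset.sum_comm]
    congr 1
    ext j
    simp [mul_ite, Finset.sum_ite_eq', Matrix.diag, mul_comm]
  -- the normalized derivation
  set T : Matrix (Fin n) (Fin n) ℂ →ₗ[ℂ] Matrix (Fin n) (Fin n) ℂ :=
    D - (βt/n) • ((Matrix.traceLinearMap (Fin n) ℂ ℂ).smulRight (1 : Matrix (Fin n) (Fin n) ℂ))
    with hT
  have hTapp : ∀ x, T x = D x - ((βt/n) * x.trace) • 1 := by
    intro x
    simp [hT, LinearMap.sub_apply, LinearMap.smul_apply, LinearMap.smulRight_apply,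
      Matrix.traceLinearMap, smul_smul]
  have htrT : ∀ x, (T x).trace = 0 := by
    intro x
    rw [hTapp, trace_sub, htrX, trace_smul, trace_one, Fintype.card_fin, smul_eq_mul]
    field_simp
    ring
  have hder1 : ∀ x y, T (x * y - y * x) = (x * T y - T y * x) + (T x * y - y * T x) := by
    intro x y
    have htc : (x * y - y * x).trace = 0 := by
      rw [trace_sub, trace_mul_comm, sub_self]
    rw [hTapp, hTapp, hTapp, hD, htc, mul_zero, zero_smul, sub_zero]
    rw [mul_sub, sub_mul, mul_sub, sub_mul]
    rw [Matrix.mul_smul, Matrix.smul_mul, mul_one, one_mul]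
    rw [Matrix.mul_smul, Matrix.smul_mul, mul_one, one_mul]
    abel
  -- basic bracket relations on basis elements
  have hS : ∀ p q : Fin n, p ≠ q → T (E p q)
      = (E p p * T (E p q) - T (E p q) * E p p) + (T (E p p) * E p q - E p q * T (E p p)) := by
    intro p q h
    have h2 := hder1 (E p p) (E p q)
    rw [E_mul_E_same, E_mul_E_ne _ _ _ _ (Ne.symm h), sub_zero] at h2
    exact h2
  have hTT : ∀ p q : Fin n, p ≠ q → T (E p q)
      = (E p q * T (E q q) - T (E q q) * E p q) + (T (E p q) * E q q - E q q * T (E p q)) := by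
    intro p q h
    have h2 := hder1 (E p q) (E q q)
    rw [E_mul_E_same, E_mul_E_ne _ _ _ _ (Ne.symm h), sub_zero] at h2
    exact h2
  have hR : ∀ p q : Fin n, p ≠ q → 0
      = (E p p * T (E q q) - T (E q q) * E p p) + (T (E p p) * E q q - E q q * T (E p p)) := by
    intro p q h
    have h2 := hder1 (E p p) (E q q)
    rw [E_mul_E_ne _ _ _ _ h, E_mul_E_ne _ _ _ _ (Ne.symm h), sub_zero, map_zero] at h2
    exact h2
  have hV : ∀ p q : Fin n, p ≠ q → T (E p p) - T (E q q)
      = (E p q * T (E q p) - T (E q p) * E p q) + (T (E p q) * E q p - E q p * T (E p q)) := by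
    intro p q h
    have h2 := hder1 (E p q) (E q p)
    rw [E_mul_E_same, E_mul_E_same, map_sub] at h2
    exact h2
  have hU : ∀ p q r : Fin n, p ≠ q → q ≠ r → r ≠ p → T (E p r)
      = (E p q * T (E q r) - T (E q r) * E p q) + (T (E p q) * E q r - E q r * T (E p q)) := by
    intro p q r hpq hqr hrp
    have h2 := hder1 (E p q) (E q r)
    rw [E_mul_E_same, E_mul_E_ne _ _ _ _ hrp, sub_zero] at h2
    exact h2
  -- entries of T (E p p)
  have hCrow : ∀ p q t : Fin n, q ≠ p →
      (T (E p p)) q t = (if t = q then (T (E p p)) p p else 0)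
        - (if t = p then (T (E p q)) p p else 0) := by
    intro p q t hqp
    have h2 := entry_eq (hS p q (Ne.symm hqp)) p t
    simp only [Matrix.add_apply, Matrix.sub_apply, E_mul_apply, mul_E_apply,
      eq_self_iff_true, if_true] at h2
    linear_combination h2
  have hCdiag0 : ∀ p : Fin n, (T (E p p)) p p = 0 := by
    intro p
    have hconst : ∀ t, (T (E p p)) t t = (T (E p p)) p p := by
      intro t
      by_cases h : t = p
      · rw [h]
      · have h3 := hCrow p t t h
        rw [if_pos rfl, if_neg h, sub_zero] at h3
        exact h3
    have h0 := htrT (E p p)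
    rw [Matrix.trace] at h0
    have hsum : ∑ t : Fin n, (T (E p p)).diag t = ∑ _t : Fin n, (T (E p p)) p p :=
      Finset.sum_congr rfl (fun t _ => hconst t)
    rw [hsum, Finset.sum_const, Finset.card_univ, Fintype.card_fin, nsmul_eq_mul] at h0
    exact (mul_eq_zero.mp h0).resolve_left hn0
  have hCanti : ∀ p q : Fin n, p ≠ q → (T (E p p)) q p + (T (E q q)) q p = 0 := by
    intro p q h
    have h2 := entry_eq (hR p q h) q p
    simp only [Matrix.add_apply, Matrix.sub_apply, Matrix.zero_apply, E_mul_apply, mul_E_apply,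
      eq_self_iff_true, if_true, if_neg h, if_neg (Ne.symm h)] at h2
    linear_combination h2
  -- entries of T (E p q), p ≠ q
  have hd1 : ∀ p q s t : Fin n, p ≠ q → s ≠ p → t ≠ q → (T (E p q)) s t = 0 := by
    intro p q s t hpq hs ht
    have h2 := entry_eq (hTT p q hpq) s t
    simp only [Matrix.add_apply, Matrix.sub_apply, E_mul_apply, mul_E_apply,
      eq_self_iff_true, if_true, if_neg hs, if_neg ht] at h2
    by_cases hsq : s = q
    · rw [if_pos hsq] at h2
      rw [hsq] at h2 ⊢
      linear_combination h2 / 2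
    · rw [if_neg hsq] at h2
      linear_combination h2
  have hd2 : ∀ p q s : Fin n, p ≠ q → s ≠ p → (T (E p q)) s q = (T (E p p)) s p := by
    intro p q s hpq hs
    have h2 := entry_eq (hS p q hpq) s q
    simp only [Matrix.add_apply, Matrix.sub_apply, E_mul_apply, mul_E_apply,
      eq_self_iff_true, if_true, if_neg hs, if_neg (Ne.symm hpq)] at h2
    linear_combination h2
  have hd3 : ∀ p q t : Fin n, p ≠ q → t ≠ q → (T (E p q)) p t = (T (E q q)) q t := by
    intro p q t hpq ht
    have h2 := entry_eq (hTT p q hpq) p t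
    simp only [Matrix.add_apply, Matrix.sub_apply, E_mul_apply, mul_E_apply,
      eq_self_iff_true, if_true, if_neg ht, if_neg hpq] at h2
    linear_combination h2
  have hd5 : ∀ p q : Fin n, p ≠ q → (T (E p q)) p q + (T (E q p)) q p = 0 := by
    intro p q h
    have h2 := entry_eq (hV p q h) p p
    simp only [Matrix.sub_apply, Matrix.add_apply, E_mul_apply, mul_E_apply,
      eq_self_iff_true, if_true, if_neg h] at h2
    have hqpp : (T (E q q)) p p = 0 := by
      have h3 := hCrow q p p h
      rw [if_pos rfl, if_neg h, sub_zero, hCdiag0 q] at h3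
      exact h3
    rw [hCdiag0 p, hqpp] at h2
    linear_combination -h2
  have hd6 : ∀ p q r : Fin n, p ≠ q → q ≠ r → r ≠ p →
      (T (E p r)) p r = (T (E p q)) p q + (T (E q r)) q r := by
    intro p q r hpq hqr hrp
    have h2 := entry_eq (hU p q r hpq hqr hrp) p r
    simp only [Matrix.add_apply, Matrix.sub_apply, E_mul_apply, mul_E_apply,
      eq_self_iff_true, if_true, if_neg hpq, if_neg (Ne.symm hqr)] at h2
    linear_combination h2
  -- the implementing matrix
  set a : Matrix (Fin n) (Fin n) ℂ := Matrix.of (fun s t =>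
    if s = t then (if s = i0 then 0 else (T (E s i0)) s i0) else (T (E t t)) s t) with haa
  have ha : ∀ s t, a s t = if s = t then (if s = i0 then 0 else (T (E s i0)) s i0)
      else (T (E t t)) s t := fun s t => rfl
  have homega : ∀ p q : Fin n, p ≠ q → (T (E p q)) p q = a p p - a q q := by
    intro p q hpq
    rw [ha p p, ha q q, if_pos rfl, if_pos rfl]
    by_cases hq : q = i0
    · rw [hq] at hpq ⊢
      rw [if_neg hpq, if_pos rfl]
      ring
    · by_cases hp : p = i0
      · rw [hp] at hpq ⊢
        rw [if_pos rfl, if_neg hq]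
        linear_combination hd5 i0 q hpq
      · rw [if_neg hp, if_neg hq]
        linear_combination -hd6 p q i0 hpq hq (fun h => hp h.symm)
  have main : ∀ p q : Fin n, T (E p q) = a * E p q - E p q * a := by
    intro p q
    ext s t
    rw [Matrix.sub_apply, E_mul_apply, mul_E_apply]
    by_cases hpq : p = q
    · subst hpq
      by_cases hs : s = p <;> by_cases ht : t = p
      · rw [if_pos ht, if_pos hs, hs, ht, hCdiag0 p]
        ring
      · rw [if_neg ht, if_pos hs, hs]
        have hpt : ¬ p = t := fun h => ht h.symm
        rw [ha, if_neg hpt]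
        linear_combination hCanti t p ht
      · rw [if_pos ht, if_neg hs, sub_zero, ht, ha, if_neg hs]
      · rw [if_neg ht, if_neg hs, sub_zero]
        by_cases hts : t = s
        · rw [hts] at ht ⊢
          have h3 := hCrow p s s hs
          rw [if_pos rfl, if_neg ht, sub_zero, hCdiag0 p] at h3
          exact h3
        · have h3 := hCrow p s t hs
          rw [if_neg hts, if_neg ht, sub_zero] at h3
          exact h3
    · by_cases hs : s = p <;> by_cases ht : t = q
      · rw [if_pos ht, if_pos hs, hs, ht]
        exact homega p q hpq
      · rw [if_neg ht, if_pos hs, hs]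
        have hqt : ¬ q = t := fun h => ht h.symm
        rw [ha, if_neg hqt]
        linear_combination hd3 p q t hpq ht + hCanti t q ht
      · rw [if_pos ht, if_neg hs, sub_zero, ht, ha, if_neg hs]
        exact hd2 p q s hpq hs
      · rw [if_neg ht, if_neg hs, sub_zero]
        exact hd1 p q s t hpq hs ht
  refine ⟨a, βt/n, ?_⟩
  have hlin : T = LinearMap.mulLeft ℂ a - LinearMap.mulRight ℂ a := by
    apply (Matrix.stdBasis ℂ (Fin n) (Fin n)).ext
    rintro ⟨p, q⟩
    rw [Matrix.stdBasis_eq_single]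
    simpa [LinearMap.sub_apply, LinearMap.mulLeft_apply, LinearMap.mulRight_apply] using main p q
  intro x
  have h4 := hTapp x
  rw [hlin] at h4
  simp only [LinearMap.sub_apply, LinearMap.mulLeft_apply, LinearMap.mulRight_apply] at h4
  rw [eq_sub_iff_add_eq] at h4
  exact h4.symm
end StmtAux

theorem stmt_15 (n : ℕ) (hn : 2 ≤ n)
    (f : Matrix (Fin n) (Fin n) ℂ →ₗ[ℂ] Matrix (Fin n) (Fin n) ℂ →ₗ[ℂ] Matrix (Fin n) (Fin n) ℂ)
    (hf1 : ∀ x y z : Matrix (Fin n) (Fin n) ℂ,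
      f (x * y - y * x) z = (x * f y z - f y z * x) + (f x z * y - y * f x z))
    (hf2 : ∀ x y z : Matrix (Fin n) (Fin n) ℂ,
      f x (y * z - z * y) = (f x y * z - z * f x y) + (y * f x z - f x z * y)) :
    ∃ lam mu : ℂ, ∀ x y : Matrix (Fin n) (Fin n) ℂ,
      f x y = (mu * x.trace * y.trace) • (1 : Matrix (Fin n) (Fin n) ℂ)
        + lam • (x * y - y * x) := by
  classical
  have hn0 : (n : ℂ) ≠ 0 := by
    simp only [ne_eq, Nat.cast_eq_zero]; omega
  set i0 : Fin n := ⟨0, by omega⟩ with hi0def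
  set i1 : Fin n := ⟨1, by omega⟩ with hi1def
  have hi01 : i0 ≠ i1 := by
    simp [hi0def, hi1def, Fin.ext_iff]
  -- slot-1 classification of derivations
  have h1 : ∀ y, ∃ a β, ∀ x, f x y = a * x - x * a + (β * x.trace) • 1 := by
    intro y
    obtain ⟨a, β, h⟩ := StmtAux.der hn (f.flip y)
      (fun x z => by simpa [LinearMap.flip_apply] using hf1 x z y)
    exact ⟨a, β, fun x => by simpa [LinearMap.flip_apply] using h x⟩
  choose A B hA using h1
  have h2 : ∀ x, ∃ c δ, ∀ y, f x y = c * y - y * c + (δ * y.trace) • 1 := by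
    intro x
    obtain ⟨c, δ, h⟩ := StmtAux.der hn (f x)
      (fun y z => by rw [hf2 x y z]; exact add_comm _ _)
    exact ⟨c, δ, h⟩
  choose C D2 hC using h2
  -- the trace coefficient
  have htrone : (1 : Matrix (Fin n) (Fin n) ℂ).trace = (n : ℂ) := by
    simp [Matrix.trace_one]
  have hA1 : ∀ y, f 1 y = (B y * n) • 1 := by
    intro y
    rw [hA y 1, mul_one, one_mul, sub_self, zero_add, htrone]
  have hC1 : ∀ x, f x 1 = (D2 x * n) • 1 := by
    intro x
    rw [hC x 1, mul_one, one_mul, sub_self, zero_add, htrone]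
  set μ : ℂ := D2 1 / n with hμdef
  have key1 : ∀ y, B y * n = D2 1 * y.trace := by
    intro y
    apply mul_right_cancel₀ hn0
    have e := (hA1 y).symm.trans (hC 1 y)
    have e2 := congrArg Matrix.trace e
    rw [trace_smul, trace_add, trace_sub, trace_mul_comm, sub_self, zero_add, trace_smul,
      htrone, smul_eq_mul, smul_eq_mul] at e2
    exact e2
  have key2 : ∀ x, D2 x * n = B 1 * x.trace := by
    intro x
    apply mul_right_cancel₀ hn0
    have e := (hC1 x).symm.trans (hA 1 x)
    have e2 := congrArg Matrix.trace e
    rw [trace_smul, trace_add, trace_sub, trace_mul_comm, sub_self, zero_add, trace_smul,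
      htrone, smul_eq_mul, smul_eq_mul] at e2
    exact e2
  have hBy : ∀ y, B y = μ * y.trace := by
    intro y
    rw [hμdef, div_mul_eq_mul_div, eq_div_iff hn0]
    linear_combination key1 y
  have hD2x : ∀ x, D2 x = μ * x.trace := by
    intro x
    have hB1 : B 1 = μ * ↑n := by rw [hBy 1, htrone]
    have h3 := key2 x
    rw [hB1] at h3
    apply mul_right_cancel₀ hn0
    linear_combination h3
  -- the compatibility relation
  have hHH : ∀ x y, A y * x - x * A y = C x * y - y * C x := by
    intro x y
    have e := (hA y x).symm.trans (hC x y)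
    rw [hBy y, hD2x x] at e
    rw [show μ * y.trace * x.trace = μ * x.trace * y.trace by ring] at e
    exact add_right_cancel e
  open StmtAux in
  have hE : ∀ (i j k l s t : Fin n),
      (if t = j then (A (E k l)) s i else 0) - (if s = i then (A (E k l)) j t else 0)
      = (if t = l then (C (E i j)) s k else 0) - (if s = k then (C (E i j)) l t else 0) := by
    intro i j k l s t
    have h := StmtAux.entry_eq (hHH (StmtAux.E i j) (StmtAux.E k l)) s t
    simpa only [Matrix.sub_apply, StmtAux.E_mul_apply, StmtAux.mul_E_apply] using h
  have pick : ∀ l : Fin n, ∃ j, j ≠ l := by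
    intro l
    by_cases h : l = i0
    · exact ⟨i1, by rw [h]; exact fun hh => hi01 hh.symm⟩
    · exact ⟨i0, fun hh => h hh.symm⟩
  have hGoff : ∀ k l s i : Fin n, s ≠ i → s ≠ k → (A (StmtAux.E k l)) s i = 0 := by
    intro k l s i hsi hsk
    obtain ⟨j, hjl⟩ := pick l
    have h := hE i j k l s j
    simp only [eq_self_iff_true, if_true, if_neg hsi, if_neg hjl, if_neg hsk,
      sub_zero, zero_sub] at h
    exact h
  have hKoff : ∀ i j s k : Fin n, s ≠ k → s ≠ i → (C (StmtAux.E i j)) s k = 0 := by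
    intro i j s k hsk hsi
    obtain ⟨t, htj⟩ := pick j
    have h := hE i j k t s t
    simp only [eq_self_iff_true, if_true, if_neg htj, if_neg hsi, if_neg hsk,
      sub_zero, zero_sub] at h
    exact h.symm
  have hGdiag : ∀ k l i j : Fin n, i ≠ k → j ≠ l →
      (A (StmtAux.E k l)) i i = (A (StmtAux.E k l)) j j := by
    intro k l i j hik hjl
    have h := hE i j k l i j
    simp only [eq_self_iff_true, if_true, if_neg hjl, if_neg hik, sub_zero, sub_self] at h
    exact sub_eq_zero.mp (by linear_combination h)
  have hGrow : ∀ k l m : Fin n, m ≠ k → m ≠ l → (A (StmtAux.E k l)) k m = 0 := by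
    intro k l m hmk hml
    obtain ⟨j, hjl⟩ := pick l
    have hkm : ¬ k = m := fun hh => hmk hh.symm
    have hlj : ¬ l = j := fun hh => hjl hh.symm
    have hlm : ¬ l = m := fun hh => hml hh.symm
    have h := hE m j k l k j
    simp only [eq_self_iff_true, if_true, if_neg hjl, if_neg hkm, sub_zero, zero_sub] at h
    rw [hKoff m j l j hlj hlm] at h
    simpa using h
  have hGdall : ∀ k l s : Fin n, k ≠ l →
      (A (StmtAux.E k l)) s s = (A (StmtAux.E k l)) l l := by
    intro k l s hkl
    have hkk : (A (StmtAux.E k l)) k k = (A (StmtAux.E k l)) l l :=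
      (hGdiag k l l k (fun h => hkl h.symm) hkl).symm
    by_cases hsk : s = k
    · rw [hsk]; exact hkk
    · rw [hGdiag k l s k hsk hkl]; exact hkk
  have hGoffd : ∀ k l : Fin n, k ≠ l → A (StmtAux.E k l)
      = ((A (StmtAux.E k l)) l l) • (1 : Matrix (Fin n) (Fin n) ℂ)
        + ((A (StmtAux.E k l)) k l) • StmtAux.E k l := by
    intro k l hkl
    ext s t
    rw [Matrix.add_apply, StmtAux.smul_one_apply, Matrix.smul_apply, StmtAux.E_apply,
      smul_eq_mul]
    by_cases hskl : s = k ∧ t = l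
    · obtain ⟨hsk, htl⟩ := hskl
      rw [if_pos (⟨hsk, htl⟩ : s = k ∧ t = l), mul_one, hsk, htl, if_neg hkl, zero_add]
    · rw [if_neg hskl, mul_zero, add_zero]
      by_cases hst : s = t
      · rw [if_pos hst, hst]
        exact hGdall k l t hkl
      · rw [if_neg hst]
        by_cases hsk : s = k
        · have htk : ¬ t = k := fun h => hst (hsk.trans h.symm)
          have htl : ¬ t = l := fun h => hskl ⟨hsk, h⟩
          rw [hsk]
          exact hGrow k l t htk htl
        · exact hGoff k l s t hst hsk
  have hGdiagc : ∀ k m : Fin n, m ≠ k → A (StmtAux.E k k)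
      = ((A (StmtAux.E k k)) m m) • (1 : Matrix (Fin n) (Fin n) ℂ)
        + ((A (StmtAux.E k k)) k k - (A (StmtAux.E k k)) m m) • StmtAux.E k k := by
    intro k m hm
    ext s t
    rw [Matrix.add_apply, StmtAux.smul_one_apply, Matrix.smul_apply, StmtAux.E_apply,
      smul_eq_mul]
    by_cases hskl : s = k ∧ t = k
    · obtain ⟨hsk, htk⟩ := hskl
      rw [if_pos (⟨hsk, htk⟩ : s = k ∧ t = k), mul_one, hsk, htk, if_pos rfl]
      ring
    · rw [if_neg hskl, mul_zero, add_zero]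
      by_cases hst : s = t
      · rw [if_pos hst, hst]
        have htk : ¬ t = k := fun h => hskl ⟨hst.trans h, h⟩
        exact hGdiag k k t m htk hm
      · rw [if_neg hst]
        by_cases hsk : s = k
        · have htk : ¬ t = k := fun h => hskl ⟨hsk, h⟩
          rw [hsk]
          exact hGrow k k t htk htk
        · exact hGoff k k s t hst hsk
  -- lambda relations
  have e1 : ∀ k l : Fin n, k ≠ l →
      (A (StmtAux.E k l)) k l = -(C (StmtAux.E l k)) l k := by
    intro k l hkl
    have h := hE l k k l k k
    simp only [eq_self_iff_true, if_true, if_neg hkl, sub_zero, zero_sub] at h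
    exact h
  have e2 : ∀ k j : Fin n, j ≠ k →
      (A (StmtAux.E k k)) k k - (A (StmtAux.E k k)) j j = -(C (StmtAux.E k j)) k j := by
    intro k j hjk
    have h := hE k j k k k j
    simp only [eq_self_iff_true, if_true, if_neg hjk, sub_zero, zero_sub] at h
    exact h
  have e3 : ∀ k j : Fin n, j ≠ k →
      (A (StmtAux.E k k)) j j - (A (StmtAux.E k k)) k k = (C (StmtAux.E j k)) j k := by
    intro k j hjk
    have h := hE j k k k j k
    simp only [eq_self_iff_true, if_true, if_neg hjk, sub_zero, zero_sub] at h
    exact h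
  have hrho : ∀ k j : Fin n, j ≠ k →
      (A (StmtAux.E k k)) k k - (A (StmtAux.E k k)) j j
      = (A (StmtAux.E j j)) j j - (A (StmtAux.E j j)) k k := by
    intro k j hjk
    linear_combination e2 k j hjk + e3 j k (fun h => hjk h.symm)
  set lam0 : ℂ := (A (StmtAux.E i0 i0)) i0 i0 - (A (StmtAux.E i0 i0)) i1 i1 with hlam0
  have hrho0 : ∀ k j : Fin n, j ≠ k →
      (A (StmtAux.E k k)) k k - (A (StmtAux.E k k)) j j = lam0 := by
    intro k j hjk
    by_cases hk0 : k = i0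
    · rw [hk0] at hjk ⊢
      by_cases hj1 : j = i1
      · rw [hj1, hlam0]
      · rw [hGdiag i0 i0 j i1 hjk (fun h => hi01 h.symm), hlam0]
    · have h1 : (A (StmtAux.E k k)) k k - (A (StmtAux.E k k)) j j
          = (A (StmtAux.E k k)) k k - (A (StmtAux.E k k)) i0 i0 := by
        by_cases hj0 : j = i0
        · rw [hj0]
        · rw [hGdiag k k j i0 hjk (fun h => hk0 h.symm)]
      have h2 := hrho k i0 (fun h => hk0 h.symm)
      have h3 : (A (StmtAux.E i0 i0)) i0 i0 - (A (StmtAux.E i0 i0)) k k = lam0 := by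
        rw [hGdiag i0 i0 k i1 hk0 (fun h => hi01 h.symm), hlam0]
      linear_combination h1 + h2 + h3
  have hlamoff : ∀ k l : Fin n, k ≠ l → (A (StmtAux.E k l)) k l = lam0 := by
    intro k l hkl
    linear_combination e1 k l hkl + e3 k l (fun h => hkl h.symm)
      + hrho0 k l (fun h => hkl h.symm)
  -- value of f on basis in second slot
  have hbasis : ∀ (x : Matrix (Fin n) (Fin n) ℂ) (k l : Fin n),
      f x (StmtAux.E k l) = (μ * x.trace * (StmtAux.E k l).trace) • 1
        + (-lam0) • (x * StmtAux.E k l - StmtAux.E k l * x) := by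
    intro x k l
    rw [hA (StmtAux.E k l) x, hBy (StmtAux.E k l)]
    have hcomm : A (StmtAux.E k l) * x - x * A (StmtAux.E k l)
        = lam0 • (StmtAux.E k l * x - x * StmtAux.E k l) := by
      by_cases hkl : k = l
      · obtain ⟨m, hm⟩ := pick l
        rw [hkl, hGdiagc l m hm, hrho0 l m hm]
        rw [add_mul, mul_add, Matrix.smul_mul, Matrix.smul_mul, Matrix.mul_smul,
          Matrix.mul_smul, one_mul, mul_one, smul_sub]
        abel
      · rw [hGoffd k l hkl, hlamoff k l hkl]
        rw [add_mul, mul_add, Matrix.smul_mul, Matrix.smul_mul, Matrix.mul_smul,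
          Matrix.mul_smul, one_mul, mul_one, smul_sub]
        abel
    rw [hcomm]
    have hneg : (-lam0) • (x * StmtAux.E k l - StmtAux.E k l * x)
        = lam0 • (StmtAux.E k l * x - x * StmtAux.E k l) := by
      rw [neg_smul, ← smul_neg, neg_sub]
    rw [hneg, show μ * (StmtAux.E k l).trace * x.trace
      = μ * x.trace * (StmtAux.E k l).trace by ring]
    exact add_comm _ _
  -- conclusion
  refine ⟨-lam0, μ, ?_⟩
  intro x y
  set R : Matrix (Fin n) (Fin n) ℂ →ₗ[ℂ] Matrix (Fin n) (Fin n) ℂ :=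
    ((μ * x.trace) • (Matrix.traceLinearMap (Fin n) ℂ ℂ).smulRight
        (1 : Matrix (Fin n) (Fin n) ℂ))
      + ((-lam0) • (LinearMap.mulLeft ℂ x - LinearMap.mulRight ℂ x)) with hRdef
  have hR : ∀ z, R z = (μ * x.trace * z.trace) • 1 + (-lam0) • (x * z - z * x) := by
    intro z
    rw [hRdef]
    simp only [LinearMap.add_apply, LinearMap.smul_apply, LinearMap.smulRight_apply,
      LinearMap.sub_apply, LinearMap.mulLeft_apply, LinearMap.mulRight_apply,
      Matrix.traceLinearMap_apply, smul_smul]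
  have hfx : f x = R := by
    apply (Matrix.stdBasis ℂ (Fin n) (Fin n)).ext
    rintro ⟨k, l⟩
    rw [Matrix.stdBasis_eq_single, hR]
    exact hbasis x k l
  rw [hfx]
  exact hR y
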